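/- Let α ∈ (-3,1] and f ∈ SK(α) with inverse f⁻¹(w) = w + Σ_{n≥2} b_n w^n near 0. Then |b₃| ≤ ((3-α)/6)·max{1, |(5α² - 33α + 45)/(6(3-α))|}. -/

import Mathlib

open Filter Metric Set Complex
open scoped Topology

namespace SK18

lemma evDiff {φ : ℂ → ℂ} {x : ℂ} (h : AnalyticAt ℂ φ x) :
    ∀ᶠ y in 𝓝 x, DifferentiableAt ℂ φ y :=
  h.eventually_analyticAt.mono fun _ hy => hy.differentiableAt

lemma aderiv {φ : ℂ → ℂ} {x : ℂ} (h : AnalyticAt ℂ φ x) : AnalyticAt ℂ (deriv φ) x := by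
  have h1 : AnalyticAt ℂ (fderiv ℂ φ) x := h.fderiv
  have h2 : AnalyticAt ℂ (fun y => fderiv ℂ φ y 1) x :=
    ((ContinuousLinearMap.apply ℂ ℂ (1 : ℂ)).analyticAt _).comp h1
  exact h2.congr (Eventually.of_forall fun y => rfl)

lemma ev_deriv_mul {φ ψ : ℂ → ℂ} {x : ℂ} (hφ : AnalyticAt ℂ φ x) (hψ : AnalyticAt ℂ ψ x) :
    deriv (fun y => φ y * ψ y) =ᶠ[𝓝 x] fun y => deriv φ y * ψ y + φ y * deriv ψ y := by
  filter_upwards [evDiff hφ, evDiff hψ] with y h1 h2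
  exact deriv_mul h1 h2

lemma ev_deriv_add {φ ψ : ℂ → ℂ} {x : ℂ} (hφ : AnalyticAt ℂ φ x) (hψ : AnalyticAt ℂ ψ x) :
    deriv (fun y => φ y + ψ y) =ᶠ[𝓝 x] fun y => deriv φ y + deriv ψ y := by
  filter_upwards [evDiff hφ, evDiff hψ] with y h1 h2
  exact deriv_add h1 h2

lemma ev_deriv_comp {φ ψ : ℂ → ℂ} {x : ℂ} (hψ : AnalyticAt ℂ ψ x) (hφ : AnalyticAt ℂ φ (ψ x)) :
    deriv (fun y => φ (ψ y)) =ᶠ[𝓝 x] fun y => deriv φ (ψ y) * deriv ψ y := by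
  have hev : ∀ᶠ y in 𝓝 x, AnalyticAt ℂ φ (ψ y) := by
    have hc : ContinuousAt ψ x := hψ.continuousAt
    exact hc (hφ.eventually_analyticAt)
  filter_upwards [hev, evDiff hψ] with y h1 h2
  exact deriv_comp y h1.differentiableAt h2

end SK18

namespace SK18

lemma normSq_mobius (a c : ℂ) :
    Complex.normSq (1 - (starRingEnd ℂ) a * c) - Complex.normSq (c - a) =
      (1 - Complex.normSq a) * (1 - Complex.normSq c) := by
  simp only [Complex.normSq_apply, Complex.sub_re, Complex.sub_im, Complex.one_re,
    Complex.one_im, Complex.mul_re, Complex.mul_im, Complex.conj_re, Complex.conj_im]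
  ring

lemma mobius_denom_ne (a c : ℂ) (ha : ‖a‖ < 1) (hc : ‖c‖ < 1) :
    1 - (starRingEnd ℂ) a * c ≠ 0 := by
  intro h
  have h1 : ‖(starRingEnd ℂ) a * c‖ < 1 := by
    rw [norm_mul, RCLike.norm_conj]
    nlinarith [norm_nonneg a, norm_nonneg c]
  have h2 : (1 : ℂ) = (starRingEnd ℂ) a * c := by linear_combination h
  rw [← h2] at h1
  simp at h1

lemma mobius_lt (a c : ℂ) (ha : ‖a‖ < 1) (hc : ‖c‖ < 1) :
    ‖(c - a) / (1 - (starRingEnd ℂ) a * c)‖ < 1 := by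
  rw [norm_div, div_lt_one (by
    rw [norm_pos_iff]; exact mobius_denom_ne a c ha hc)]
  have key := normSq_mobius a c
  have ha' : ‖a‖ < 1 := by simpa using ha
  have hc' : ‖c‖ < 1 := by simpa using hc
  have ha2 : Complex.normSq a < 1 := by
    rw [Complex.normSq_eq_norm_sq]; nlinarith [norm_nonneg a]
  have hc2 : Complex.normSq c < 1 := by
    rw [Complex.normSq_eq_norm_sq]; nlinarith [norm_nonneg c]
  have h3 : Complex.normSq (c - a) < Complex.normSq (1 - (starRingEnd ℂ) a * c) := by
    nlinarith
  rw [← Complex.sq_norm, ← Complex.sq_norm] at h3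
  have := lt_of_pow_lt_pow_left₀ 2 (norm_nonneg _) h3
  simpa using this

/-- Schwarz–Pick at the center: if `g` is differentiable on the unit ball and bounded by 1,
then `‖deriv g 0‖ ≤ 1 - ‖g 0‖ ^ 2`. -/
lemma schwarz_pick_center {g : ℂ → ℂ} (hd : DifferentiableOn ℂ g (ball 0 1))
    (hb : ∀ z ∈ ball (0 : ℂ) 1, ‖g z‖ ≤ 1) : ‖deriv g 0‖ ≤ 1 - ‖g 0‖ ^ 2 := by
  by_cases hstrict : ∀ z ∈ ball (0 : ℂ) 1, ‖g z‖ < 1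
  · set a := g 0 with ha_def
    have ha : ‖a‖ < 1 := hstrict 0 (mem_ball_self one_pos)
    set φ : ℂ → ℂ := fun z => (g z - a) / (1 - (starRingEnd ℂ) a * g z) with hφ_def
    have hdenom : ∀ z ∈ ball (0 : ℂ) 1, 1 - (starRingEnd ℂ) a * g z ≠ 0 := fun z hz =>
      mobius_denom_ne a (g z) ha (hstrict z hz)
    have hφd : DifferentiableOn ℂ φ (ball 0 1) :=
      (hd.sub_const a).div ((differentiableOn_const _).sub
        ((differentiableOn_const _).mul hd)) hdenom
    have hφ0 : φ 0 = 0 := by simp [hφ_def, ← ha_def]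
    have hmaps : MapsTo φ (ball (0:ℂ) 1) (ball (φ 0) 1) := by
      rw [hφ0]
      intro z hz
      rw [mem_ball_zero_iff]
      exact mobius_lt a (g z) ha (hstrict z hz)
    have hsch := Complex.norm_deriv_le_div_of_mapsTo_ball hφd (hmaps.mono_right ball_subset_closedBall) one_pos
    -- compute deriv φ 0
    have hg0d : DifferentiableAt ℂ g 0 :=
      hd.differentiableAt (isOpen_ball.mem_nhds (mem_ball_self one_pos))
    have hval : (1 : ℂ) - (starRingEnd ℂ) a * a ≠ 0 := hdenom 0 (mem_ball_self one_pos)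
    have hderφ : deriv φ 0 = deriv g 0 / (1 - (starRingEnd ℂ) a * a) := by
      have hu : DifferentiableAt ℂ (fun z => g z - a) 0 := hg0d.sub_const a
      have hv : DifferentiableAt ℂ (fun z => (1:ℂ) - (starRingEnd ℂ) a * g z) 0 :=
        (differentiableAt_const _).sub ((differentiableAt_const _).mul hg0d)
      have h1 : deriv (fun z => g z - a) 0 = deriv g 0 := by
        rw [deriv_sub_const]
      have h2 : deriv (fun z => (1:ℂ) - (starRingEnd ℂ) a * g z) 0 =
          -((starRingEnd ℂ) a * deriv g 0) := by
        rw [deriv_const_sub, deriv_const_mul _ hg0d]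
      have h3 := deriv_fun_div hu hv (x := 0) hval
      rw [hφ_def]
      rw [h3, h1, h2]
      have h4 : g 0 - a = 0 := by rw [← ha_def]; ring
      rw [← ha_def, h4]
      field_simp
      ring
    have hnsq : (1 : ℂ) - (starRingEnd ℂ) a * a = ((1 - ‖a‖ ^ 2 : ℝ) : ℂ) := by
      have : (starRingEnd ℂ) a * a = ((Complex.normSq a : ℝ) : ℂ) := by
        rw [mul_comm, Complex.mul_conj]
      rw [this, Complex.normSq_eq_norm_sq]
      push_cast
      simp
    have hpos : (0:ℝ) < 1 - ‖a‖ ^ 2 := by nlinarith [norm_nonneg a]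
    rw [hderφ, hnsq] at hsch
    have hsch2 : ‖deriv g 0‖ / (1 - ‖a‖ ^ 2) ≤ 1 := by
      have : ‖(((1 - ‖a‖ ^ 2 : ℝ)) : ℂ)‖ = 1 - ‖a‖ ^ 2 := by
        rw [Complex.norm_real, Real.norm_eq_abs, abs_of_pos hpos]
      rw [norm_div, this] at hsch
      simpa using hsch
    rw [div_le_one hpos] at hsch2
    simpa [ha_def] using hsch2
  · push_neg at hstrict
    obtain ⟨z₀, hz₀, hge⟩ := hstrict
    have heq1 : ‖g z₀‖ = 1 := le_antisymm (hb z₀ hz₀) hge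
    have hmax : IsMaxOn (norm ∘ g) (ball (0:ℂ) 1) z₀ := fun z hz => by
      simp only [Function.comp]
      rw [heq1]; exact hb z hz
    have hEq := Complex.eqOn_of_isPreconnected_of_isMaxOn_norm
      (convex_ball (0:ℂ) 1).isPreconnected isOpen_ball hd hz₀ hmax
    have hev : g =ᶠ[𝓝 0] fun _ => g z₀ :=
      eventuallyEq_iff_exists_mem.2 ⟨ball 0 1, isOpen_ball.mem_nhds (mem_ball_self one_pos), hEq⟩
    have : deriv g 0 = 0 := by
      rw [hev.deriv_eq]; simp
    rw [this, norm_zero]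
    have : ‖g 0‖ = 1 := by rw [hEq (mem_ball_self one_pos)]; exact heq1
    rw [this]; norm_num

end SK18

namespace SK18

lemma finv_series {finv : ℂ → ℂ} {b : ℕ → ℂ} {ε : ℝ} (hε : 0 < ε)
    (hbsum : ∀ u : ℂ, ‖u‖ < ε → HasSum (fun n : ℕ => b (n + 1) * u ^ (n + 1)) (finv u)) :
    AnalyticAt ℂ finv 0 ∧ deriv finv 0 = b 1 ∧ deriv (deriv finv) 0 = 2 * b 2 ∧
      deriv (deriv (deriv finv)) 0 = 6 * b 3 := by
  classical
  set c : ℕ → ℂ := fun n => if n = 0 then 0 else b n with hc_def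
  set p := FormalMultilinearSeries.ofScalars ℂ c with hp_def
  have hps : HasFPowerSeriesOnBall finv p 0 (ENNReal.ofReal ε) := by
    refine ⟨?_, by simp [hε], ?_⟩
    · refine ENNReal.le_of_forall_nnreal_lt fun r hr => ?_
      have hrε : (r : ℝ) < ε := by
        rwa [← ENNReal.ofReal_coe_nnreal, ENNReal.ofReal_lt_ofReal_iff hε] at hr
      have hsum := (hbsum ((r : ℝ) : ℂ) (by simpa using hrε)).summable
      have htend : Filter.Tendsto (fun n => ‖b (n + 1) * ((r:ℝ):ℂ) ^ (n + 1)‖)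
          Filter.atTop (𝓝 0) := by simpa using hsum.tendsto_atTop_zero.norm
      obtain ⟨C, hC⟩ := htend.bddAbove_range
      have hC' : ∀ n, ‖b (n + 1) * ((r:ℝ):ℂ) ^ (n + 1)‖ ≤ C := fun n =>
        hC (Set.mem_range_self n)
      refine p.le_radius_of_bound (max C 0) fun n => ?_
      have hpn : ‖p n‖ = ‖c n‖ := FormalMultilinearSeries.ofScalars_norm (E := ℂ) c n
      rw [hpn]
      cases n with
      | zero => simp [hc_def]
      | succ m =>
        have : ‖c (m + 1)‖ * (r : ℝ) ^ (m + 1) = ‖b (m + 1) * ((r:ℝ):ℂ) ^ (m + 1)‖ := by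
          rw [norm_mul, norm_pow, Complex.norm_real, Real.norm_eq_abs,
            _root_.abs_of_nonneg r.coe_nonneg]
          simp [hc_def]
        rw [this]
        exact le_max_of_le_left (hC' m)
    · intro y hy
      have hyε : ‖y‖ < ε := by
        rw [EMetric.mem_ball, edist_zero_right] at hy
        have h5 : ((‖y‖₊ : NNReal) : ENNReal) < ENNReal.ofReal ε := hy
        rw [← ENNReal.ofReal_coe_nnreal, ENNReal.ofReal_lt_ofReal_iff hε] at h5
        simpa using h5
      have h1 := hbsum y hyε
      have h1' : HasSum (fun n => c (n + 1) * y ^ (n + 1)) (finv y) := by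
        simpa [hc_def] using h1
      have h2 := (hasSum_nat_add_iff (f := fun n => c n * y ^ n) 1).mp h1'
      simp only [Finset.range_one, Finset.sum_singleton, pow_zero] at h2
      have h3 : HasSum (fun n => c n * y ^ n) (finv y) := by
        simpa [hc_def] using h2
      have h4 : (fun n => p n fun _ => y) = fun n => c n * y ^ n := by
        funext n
        rw [hp_def, FormalMultilinearSeries.ofScalars_apply_eq, smul_eq_mul]
      rw [h4, zero_add]
      exact h3
  have hkey : ∀ n, iteratedDeriv n finv 0 = (n.factorial : ℂ) * c n := by
    intro n
    have h := hps.factorial_smul (y := (1 : ℂ)) n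
    have hl : p n (fun _ => (1:ℂ)) = c n := by
      rw [hp_def, FormalMultilinearSeries.ofScalars_apply_eq]; simp
    rw [hl] at h
    rw [iteratedDeriv_eq_iteratedFDeriv, ← h]
    simp [nsmul_eq_mul]
  refine ⟨hps.analyticAt, ?_, ?_, ?_⟩
  · have := hkey 1
    rwa [iteratedDeriv_one, Nat.factorial_one, Nat.cast_one, one_mul,
      show c 1 = b 1 from rfl] at this
  · have := hkey 2
    rw [iteratedDeriv_succ, iteratedDeriv_one] at this
    rw [this]; norm_num [hc_def, Nat.factorial]
  · have := hkey 3
    rw [iteratedDeriv_succ, iteratedDeriv_succ, iteratedDeriv_one] at this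
    rw [this]; norm_num [hc_def, Nat.factorial]

end SK18

/-- q̃_α(z) = 3/(3 + (α-3)z - αz²). -/
noncomputable def qt (α : ℝ) (z : ℂ) : ℂ := 3 / (3 + ((α : ℂ) - 3) * z - (α : ℂ) * z ^ 2)

namespace SK18

lemma deriv_mul_at {φ ψ : ℂ → ℂ} {x : ℂ} (hφ : AnalyticAt ℂ φ x) (hψ : AnalyticAt ℂ ψ x) :
    deriv (fun y => φ y * ψ y) x = deriv φ x * ψ x + φ x * deriv ψ x :=
  deriv_mul hφ.differentiableAt hψ.differentiableAt

lemma deriv_add_at {φ ψ : ℂ → ℂ} {x : ℂ} (hφ : AnalyticAt ℂ φ x) (hψ : AnalyticAt ℂ ψ x) :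
    deriv (fun y => φ y + ψ y) x = deriv φ x + deriv ψ x :=
  deriv_add hφ.differentiableAt hψ.differentiableAt

lemma deriv_comp_at {φ ψ : ℂ → ℂ} {x : ℂ} (hψ : AnalyticAt ℂ ψ x) (hφ : AnalyticAt ℂ φ (ψ x)) :
    deriv (fun y => φ (ψ y)) x = deriv φ (ψ x) * deriv ψ x :=
  deriv_comp x hφ.differentiableAt hψ.differentiableAt

section qtfacts

variable (α : ℝ)

private noncomputable def Dq (α : ℝ) : ℂ → ℂ := fun z => 3 + ((α : ℂ) - 3) * z - (α : ℂ) * z ^ 2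

lemma hasDerivAt_Dq (z : ℂ) : HasDerivAt (Dq α) (((α : ℂ) - 3) - 2 * α * z) z := by
  have h : HasDerivAt (Dq α) (0 + ((α : ℂ) - 3) * 1 - (α : ℂ) * (2 * z ^ 1)) z := by
    exact ((hasDerivAt_const z (3:ℂ)).add ((hasDerivAt_id z).const_mul _)).sub
      ((hasDerivAt_pow 2 z).const_mul (α : ℂ))
  convert h using 1
  ring

lemma Dq_analytic : AnalyticAt ℂ (Dq α) 0 := by
  unfold Dq
  exact (analyticAt_const.add (analyticAt_const.mul analyticAt_id)).sub
    (analyticAt_const.mul (analyticAt_id.pow 2))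

lemma qt_eq : qt α = fun z => 3 / Dq α z := rfl

lemma Dq_zero : Dq α 0 = 3 := by simp [Dq]

lemma qt_analytic : AnalyticAt ℂ (qt α) 0 := by
  rw [qt_eq]
  exact analyticAt_const.div (Dq_analytic α) (by rw [Dq_zero]; norm_num)

lemma qt_zero : qt α 0 = 1 := by simp [qt]

lemma Dq_ne_ev : ∀ᶠ z in 𝓝 (0 : ℂ), Dq α z ≠ 0 := by
  have hc : ContinuousAt (Dq α) 0 := (hasDerivAt_Dq α 0).continuousAt
  exact hc.eventually_ne (by rw [Dq_zero]; norm_num)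

lemma qt_deriv_ev : deriv (qt α) =ᶠ[𝓝 0]
    fun z => (-3 * (((α : ℂ) - 3) - 2 * α * z)) / (Dq α z) ^ 2 := by
  filter_upwards [Dq_ne_ev α] with z hz
  rw [qt_eq]
  rw [deriv_fun_div (differentiableAt_const 3) (hasDerivAt_Dq α z).differentiableAt hz,
    deriv_const, (hasDerivAt_Dq α z).deriv]
  ring

lemma qt_deriv_zero : deriv (qt α) 0 = (3 - (α : ℂ)) / 3 := by
  rw [(qt_deriv_ev α).self_of_nhds]
  simp only [Dq_zero, mul_zero, sub_zero]
  field_simp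
  ring

lemma qt_deriv2_zero : deriv (deriv (qt α)) 0 = (2 * ((α : ℂ) - 3) ^ 2 + 6 * α) / 9 := by
  rw [(qt_deriv_ev α).deriv_eq]
  have hu : HasDerivAt (fun z : ℂ => -3 * (((α : ℂ) - 3) - 2 * α * z)) (6 * α) 0 := by
    have h : HasDerivAt (fun z : ℂ => -3 * (((α : ℂ) - 3) - 2 * α * z))
        ((-3 : ℂ) * -(2 * α * 1)) 0 := (((hasDerivAt_id (0:ℂ)).const_mul
          (2 * (α:ℂ))).const_sub _).const_mul _
    convert h using 1; ring
  have hv : HasDerivAt (fun z => (Dq α z) ^ 2) (2 * Dq α 0 ^ 1 * (((α : ℂ) - 3) - 2 * α * 0)) 0 :=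
    (hasDerivAt_Dq α 0).pow 2
  have hvne : (Dq α 0) ^ 2 ≠ 0 := by rw [Dq_zero]; norm_num
  rw [deriv_fun_div hu.differentiableAt hv.differentiableAt hvne, hu.deriv, hv.deriv, Dq_zero]
  field_simp
  ring

end qtfacts

end SK18

open SK18 Filter Metric Set Complex
open scoped Topology

set_option maxHeartbeats 1000000 in
/-- If f ∈ SK(α) has inverse f⁻¹(u) = u + ∑_{n≥2} b_n u^n near 0, then
    |b₃| ≤ ((3-α)/6) max{1, |(5α² - 33α + 45)/(6(3-α))|}. -/
theorem stmt18 (α : ℝ) (hα1 : -3 < α) (hα2 : α ≤ 1) (f w finv : ℂ → ℂ) (b : ℕ → ℂ)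
    (ε : ℝ) (hε : 0 < ε)
    (hf : DifferentiableOn ℂ f (Metric.ball 0 1)) (hf0 : f 0 = 0) (hf1 : deriv f 0 = 1)
    (hfne : ∀ z : ℂ, ‖z‖ < 1 → z ≠ 0 → f z ≠ 0)
    (hw : DifferentiableOn ℂ w (Metric.ball 0 1)) (hw0 : w 0 = 0)
    (hwb : ∀ z : ℂ, ‖z‖ < 1 → ‖w z‖ < 1)
    (hsub : ∀ z : ℂ, ‖z‖ < 1 → z ≠ 0 → z * deriv f z / f z = qt α (w z))
    (hb1 : b 1 = 1)
    (hbsum : ∀ u : ℂ, ‖u‖ < ε → HasSum (fun n : ℕ => b (n + 1) * u ^ (n + 1)) (finv u))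
    (hinv : ∀ z : ℂ, ‖z‖ < ε → finv (f z) = z) :
    ‖b 3‖ ≤ (3 - α) / 6 *
      max 1 ‖((5 * (α : ℂ) ^ 2 - 33 * (α : ℂ) + 45) / (6 * (3 - (α : ℂ))))‖ := by
  have hball : Metric.ball (0:ℂ) 1 ∈ 𝓝 (0:ℂ) := isOpen_ball.mem_nhds (mem_ball_self one_pos)
  have hfa : AnalyticAt ℂ f 0 := hf.analyticAt hball
  have hwa : AnalyticAt ℂ w 0 := hw.analyticAt hball
  have hida : AnalyticAt ℂ (fun y : ℂ => y) 0 := analyticAt_id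
  -- ### Schwarz part for w
  set g := dslope w 0 with hg_def
  have hgd : DifferentiableOn ℂ g (ball 0 1) := (differentiableOn_dslope hball).mpr hw
  have hga : AnalyticAt ℂ g 0 := hgd.analyticAt hball
  have hwmaps : MapsTo w (ball (0:ℂ) 1) (ball (w 0) 1) := by
    intro z hz
    rw [hw0, mem_ball_zero_iff]
    exact hwb z (mem_ball_zero_iff.mp hz)
  have hgb : ∀ z ∈ ball (0:ℂ) 1, ‖g z‖ ≤ 1 := fun z hz => by
    simpa using Complex.norm_dslope_le_div_of_mapsTo_ball hw (hwmaps.mono_right ball_subset_closedBall) hz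
  set c1 : ℂ := deriv w 0 with hc1_def
  set c2 : ℂ := deriv g 0 with hc2_def
  have hc1g : g 0 = c1 := dslope_same w 0
  have hc1 : ‖c1‖ ≤ 1 := by
    rw [← hc1g]; exact hgb 0 (mem_ball_self one_pos)
  have hc2 : ‖c2‖ ≤ 1 - ‖c1‖ ^ 2 := by
    have := schwarz_pick_center hgd hgb
    rwa [hc1g, ← hc2_def] at this
  -- w(z) = z * g(z)
  have hwg : w = fun z => z * g z := by
    funext z
    rcases eq_or_ne z 0 with rfl | hz
    · simp [hw0]
    · rw [hg_def, dslope_of_ne w hz, slope_def_field, hw0]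
      field_simp
      ring
  have hW2 : deriv (deriv w) 0 = 2 * c2 := by
    have h1 : deriv w =ᶠ[𝓝 0] fun z => g z + z * deriv g z := by
      rw [hwg]
      refine (ev_deriv_mul hida hga).trans (Eventually.of_forall fun y => ?_)
      simp [mul_comm]
    rw [h1.deriv_eq, deriv_add_at hga (hida.fun_mul (aderiv hga)),
      deriv_mul_at hida (aderiv hga)]
    simp only [deriv_id'']
    rw [← hc2_def]
    ring
  -- ### finv power series facts
  obtain ⟨hFa, hF1, hF2, hF3⟩ := finv_series hε hbsum
  rw [hb1] at hF1
  set A2 : ℂ := deriv (deriv f) 0 with hA2_def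
  set A3 : ℂ := deriv (deriv (deriv f)) 0 with hA3_def
  have hfa1 : AnalyticAt ℂ (deriv f) 0 := aderiv hfa
  have hfa2 : AnalyticAt ℂ (deriv (deriv f)) 0 := aderiv hfa1
  have hfa3 : AnalyticAt ℂ (deriv (deriv (deriv f))) 0 := aderiv hfa2
  have hFf : AnalyticAt ℂ finv (f 0) := by rw [hf0]; exact hFa
  have hFf1 : AnalyticAt ℂ (deriv finv) (f 0) := by rw [hf0]; exact aderiv hFa
  have hFf2 : AnalyticAt ℂ (deriv (deriv finv)) (f 0) := by rw [hf0]; exact aderiv (aderiv hFa)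
  have hFfa : AnalyticAt ℂ (fun y => deriv finv (f y)) 0 := hFf1.comp hfa
  have hFfa2 : AnalyticAt ℂ (fun y => deriv (deriv finv) (f y)) 0 := hFf2.comp hfa
  -- ### inverse composition identities
  have hE0 : (fun z => finv (f z)) =ᶠ[𝓝 0] id := by
    filter_upwards [Metric.ball_mem_nhds (0:ℂ) hε] with z hz
    exact hinv z (mem_ball_zero_iff.mp hz)
  have hE1 : (fun y => deriv finv (f y) * deriv f y) =ᶠ[𝓝 0] fun _ => (1:ℂ) := by
    have ha := ev_deriv_comp hfa hFf
    have hb' := hE0.deriv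
    have hone : deriv (id : ℂ → ℂ) = fun _ => (1:ℂ) := funext fun y => deriv_id y
    rw [hone] at hb'
    exact ha.symm.trans hb'
  have hG2 : (fun y => deriv (fun t => deriv finv (f t)) y * deriv f y
      + deriv finv (f y) * deriv (deriv f) y) =ᶠ[𝓝 0] fun _ => (0:ℂ) := by
    have ha := ev_deriv_mul hFfa hfa1
    have hb' := hE1.deriv
    have hzero : deriv (fun _ : ℂ => (1:ℂ)) = fun _ => (0:ℂ) := funext fun y => deriv_const y 1
    rw [hzero] at hb'
    exact ha.symm.trans hb'
  have hdFf0 : deriv (fun t => deriv finv (f t)) 0 = 2 * b 2 := by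
    rw [deriv_comp_at hfa hFf1, hf0, hF2, hf1]; ring
  have hb2 : 2 * b 2 + A2 = 0 := by
    have := hG2.self_of_nhds
    simp only [hdFf0, hf0, hF1, hf1, one_mul, mul_one] at this
    rw [hA2_def]
    linear_combination this
  have hb3A : 6 * b 3 + 6 * b 2 * A2 + A3 = 0 := by
    have h0 := hG2.deriv_eq
    have hzero : deriv (fun _ : ℂ => (0:ℂ)) 0 = 0 := by simp
    rw [hzero] at h0
    have hd1 : AnalyticAt ℂ (fun y => deriv (fun t => deriv finv (f t)) y) 0 :=
      aderiv hFfa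
    have hexp : deriv (fun y => deriv (fun t => deriv finv (f t)) y * deriv f y
        + deriv finv (f y) * deriv (deriv f) y) 0
        = (deriv (deriv (fun t => deriv finv (f t))) 0 * deriv f 0
            + deriv (fun t => deriv finv (f t)) 0 * A2)
          + (deriv (fun t => deriv finv (f t)) 0 * deriv (deriv f) 0
            + deriv finv (f 0) * A3) := by
      rw [deriv_add_at (hd1.fun_mul hfa1) (hFfa.fun_mul hfa2),
        deriv_mul_at hd1 hfa1, deriv_mul_at hFfa hfa2]
    have hdd : deriv (deriv (fun t => deriv finv (f t))) 0 = 6 * b 3 + 2 * b 2 * A2 := by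
      have hev := ev_deriv_comp hfa hFf1
      rw [hev.deriv_eq, deriv_mul_at hFfa2 hfa1, deriv_comp_at hfa hFf2, hf0, hF3, hf1,
        hF2, hA2_def]
      ring
    rw [hexp, hdd, hdFf0, hf0, hF1, hf1] at h0
    linear_combination h0
  -- ### subordination identities
  set Q : ℂ → ℂ := fun z => qt α (w z) with hQ_def
  have hqtw : AnalyticAt ℂ (qt α) (w 0) := by rw [hw0]; exact qt_analytic α
  have hqtw1 : AnalyticAt ℂ (deriv (qt α)) (w 0) := by rw [hw0]; exact aderiv (qt_analytic α)
  have hQa : AnalyticAt ℂ Q 0 := hqtw.comp hwa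
  have hQ0 : Q 0 = 1 := by rw [hQ_def]; simp only; rw [hw0, qt_zero]
  set Q1v : ℂ := deriv Q 0 with hQ1v_def
  set Q2v : ℂ := deriv (deriv Q) 0 with hQ2v_def
  have hQ1 : Q1v = (3 - (α:ℂ)) / 3 * c1 := by
    rw [hQ1v_def, hQ_def, deriv_comp_at hwa hqtw, hw0, qt_deriv_zero, hc1_def]
  have hQa1 : AnalyticAt ℂ (fun y => deriv (qt α) (w y)) 0 := hqtw1.comp hwa
  have hQ2 : Q2v = (2 * ((α:ℂ) - 3) ^ 2 + 6 * α) / 9 * c1 ^ 2 + (3 - (α:ℂ)) / 3 * (2 * c2) := by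
    have hev := ev_deriv_comp hwa hqtw
    rw [hQ2v_def, hQ_def]
    rw [hev.deriv_eq, deriv_mul_at hQa1 (aderiv hwa),
      deriv_comp_at hwa (by rw [hw0]; exact aderiv (qt_analytic α)), hw0,
      qt_deriv2_zero, qt_deriv_zero, hW2, hc1_def]
    ring
  have hLR : (fun z => f z * Q z) =ᶠ[𝓝 0] fun z => z * deriv f z := by
    filter_upwards [hball] with z hz
    rcases eq_or_ne z 0 with rfl | hne
    · simp [hf0, hQ0]
    · have h := hsub z (mem_ball_zero_iff.mp hz) hne
      have hfz : f z ≠ 0 := hfne z (mem_ball_zero_iff.mp hz) hne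
      show f z * qt α (w z) = z * deriv f z
      rw [← h, mul_comm, div_mul_cancel₀ _ hfz]
  -- level 1
  have evL1 := ev_deriv_mul hfa hQa
  have evR1 : deriv (fun z : ℂ => z * deriv f z) =ᶠ[𝓝 0]
      fun y => deriv f y + y * deriv (deriv f) y := by
    refine (ev_deriv_mul hida hfa1).trans (Eventually.of_forall fun y => ?_)
    simp
  have hEV1 : (fun y => deriv f y * Q y + f y * deriv Q y) =ᶠ[𝓝 0]
      fun y => deriv f y + y * deriv (deriv f) y :=
    evL1.symm.trans (hLR.deriv.trans evR1)
  have h2eq : A2 + 2 * Q1v = 2 * A2 := by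
    have h0 := hEV1.deriv_eq
    rw [deriv_add_at (hfa1.fun_mul hQa) (hfa.fun_mul (aderiv hQa)),
      deriv_mul_at hfa1 hQa, deriv_mul_at hfa (aderiv hQa),
      deriv_add_at hfa1 (hida.fun_mul hfa2), deriv_mul_at hida hfa2] at h0
    simp only [hf0, hf1, hQ0, deriv_id', deriv_id''] at h0
    rw [← hA2_def, ← hQ1v_def] at h0
    linear_combination h0
  -- level 2
  have evL2 : deriv (fun y => deriv f y * Q y + f y * deriv Q y) =ᶠ[𝓝 0]
      fun y => (deriv (deriv f) y * Q y + deriv f y * deriv Q y)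
        + (deriv f y * deriv Q y + f y * deriv (deriv Q) y) := by
    refine (ev_deriv_add (hfa1.fun_mul hQa) (hfa.fun_mul (aderiv hQa))).trans ?_
    filter_upwards [ev_deriv_mul hfa1 hQa, ev_deriv_mul hfa (aderiv hQa)] with y h1 h2
    rw [h1, h2]
  have evR2 : deriv (fun y => deriv f y + y * deriv (deriv f) y) =ᶠ[𝓝 0]
      fun y => deriv (deriv f) y + (deriv (deriv f) y + y * deriv (deriv (deriv f)) y) := by
    refine (ev_deriv_add hfa1 (hida.fun_mul hfa2)).trans ?_
    filter_upwards [ev_deriv_mul hida hfa2] with y h1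
    rw [h1]
    simp
  have h3eq : A3 + 3 * A2 * Q1v + 3 * Q2v = 3 * A3 := by
    have hEV2 : (fun y => (deriv (deriv f) y * Q y + deriv f y * deriv Q y)
        + (deriv f y * deriv Q y + f y * deriv (deriv Q) y)) =ᶠ[𝓝 0]
        fun y => deriv (deriv f) y + (deriv (deriv f) y + y * deriv (deriv (deriv f)) y) :=
      evL2.symm.trans (hEV1.deriv.trans evR2)
    have h0 := hEV2.deriv_eq
    have hL21 : AnalyticAt ℂ (fun y => deriv (deriv f) y * Q y + deriv f y * deriv Q y) 0 :=
      (hfa2.fun_mul hQa).add (hfa1.fun_mul (aderiv hQa))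
    have hL22 : AnalyticAt ℂ (fun y => deriv f y * deriv Q y + f y * deriv (deriv Q) y) 0 :=
      (hfa1.fun_mul (aderiv hQa)).add (hfa.fun_mul (aderiv (aderiv hQa)))
    have hR22 : AnalyticAt ℂ (fun y => deriv (deriv f) y + y * deriv (deriv (deriv f)) y) 0 :=
      hfa2.add (hida.fun_mul hfa3)
    rw [deriv_add_at hL21 hL22,
      deriv_add_at (hfa2.fun_mul hQa) (hfa1.fun_mul (aderiv hQa)),
      deriv_add_at (hfa1.fun_mul (aderiv hQa)) (hfa.fun_mul (aderiv (aderiv hQa))),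
      deriv_mul_at hfa2 hQa, deriv_mul_at hfa1 (aderiv hQa),
      deriv_mul_at hfa (aderiv (aderiv hQa)),
      deriv_add_at hfa2 hR22,
      deriv_add_at hfa2 (hida.fun_mul hfa3),
      deriv_mul_at hida hfa3] at h0
    simp only [hf0, hf1, hQ0, deriv_id', deriv_id''] at h0
    rw [← hA2_def, ← hA3_def, ← hQ1v_def, ← hQ2v_def] at h0
    linear_combination h0
  -- ### algebra: explicit formula for b 3
  have hb3 : b 3 = ((2 * (α:ℂ) ^ 2 - 15 * α + 18) / 18) * c1 ^ 2 - ((3 - (α:ℂ)) / 6) * c2 := by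
    have e1 : A2 = 2 * Q1v := by linear_combination -h2eq
    have e2 : A3 = 3 * Q1v ^ 2 + (3/2) * Q2v := by
      linear_combination (-1/2) * h3eq + (3 * Q1v / 2) * e1
    have e3 : b 2 = -A2 / 2 := by linear_combination (1/2) * hb2
    have e4 : b 3 = A2 ^ 2 / 2 - A3 / 6 := by
      linear_combination (1/6) * hb3A - A2 * e3
    have e5 : b 3 = (3/2) * Q1v ^ 2 - Q2v / 4 := by
      linear_combination e4 + ((A2 + 2 * Q1v) / 2) * e1 - (1/6) * e2
    linear_combination e5 + (3/2) * (Q1v + (3 - (α:ℂ))/3 * c1) * hQ1 - (1/4) * hQ2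
  -- ### norm estimates
  have hT0 : (0:ℝ) ≤ (2 * α ^ 2 - 15 * α + 18) / 18 := by nlinarith
  have hS0 : (0:ℝ) ≤ (3 - α) / 6 := by linarith
  have hnormT : ‖((2 * (α:ℂ) ^ 2 - 15 * α + 18) / 18)‖ = (2 * α ^ 2 - 15 * α + 18) / 18 := by
    have h : ((2 * (α:ℂ) ^ 2 - 15 * α + 18) / 18) = (((2 * α ^ 2 - 15 * α + 18) / 18 : ℝ) : ℂ) := by
      push_cast; ring
    rw [h, Complex.norm_real, Real.norm_eq_abs, _root_.abs_of_nonneg hT0]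
  have hnormS : ‖((3 - (α:ℂ)) / 6)‖ = (3 - α) / 6 := by
    have h : ((3 - (α:ℂ)) / 6) = (((3 - α) / 6 : ℝ) : ℂ) := by push_cast; ring
    rw [h, Complex.norm_real, Real.norm_eq_abs, _root_.abs_of_nonneg hS0]
  have hbnd : ‖b 3‖ ≤ (2 * α ^ 2 - 15 * α + 18) / 18 * ‖c1‖ ^ 2 + (3 - α) / 6 * ‖c2‖ := by
    rw [hb3]
    refine (norm_sub_le _ _).trans ?_
    rw [norm_mul, norm_mul, norm_pow, hnormT, hnormS]
  have hnum : (0:ℝ) < 5 * α ^ 2 - 33 * α + 45 := by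
    nlinarith [mul_nonneg (by linarith : (0:ℝ) ≤ 1 - α) (by linarith : (0:ℝ) ≤ 28 - 5 * α)]
  have hden : (0:ℝ) < 6 * (3 - α) := by linarith
  have hnormR : ‖((5 * (α : ℂ) ^ 2 - 33 * (α : ℂ) + 45) / (6 * (3 - (α : ℂ))))‖
      = (5 * α ^ 2 - 33 * α + 45) / (6 * (3 - α)) := by
    have h : ((5 * (α : ℂ) ^ 2 - 33 * (α : ℂ) + 45) / (6 * (3 - (α : ℂ))))
        = (((5 * α ^ 2 - 33 * α + 45) / (6 * (3 - α)) : ℝ) : ℂ) := by push_cast; ring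
    rw [h, Complex.norm_real, Real.norm_eq_abs,
      _root_.abs_of_pos (div_pos hnum hden)]
  rw [hnormR]
  set t : ℝ := (5 * α ^ 2 - 33 * α + 45) / (6 * (3 - α)) with ht_def
  set M : ℝ := max 1 t with hM_def
  have hM1 : (1:ℝ) ≤ M := le_max_left _ _
  have hMt : t ≤ M := le_max_right _ _
  have hTSt : (2 * α ^ 2 - 15 * α + 18) / 18 ≤ (3 - α) / 6 * t := by
    rw [ht_def]
    rw [div_mul_div_comm, div_le_div_iff₀ (by norm_num) (by positivity)]
    nlinarith [sq_nonneg (α - 3/2), sq_nonneg α]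
  have hx0 : (0:ℝ) ≤ ‖c1‖ ^ 2 := sq_nonneg _
  have hx1 : ‖c1‖ ^ 2 ≤ 1 := by nlinarith [norm_nonneg c1]
  have hc2' : ‖c2‖ ≤ 1 - ‖c1‖ ^ 2 := hc2
  have hc20 : (0:ℝ) ≤ ‖c2‖ := norm_nonneg _
  calc ‖b 3‖ ≤ (2 * α ^ 2 - 15 * α + 18) / 18 * ‖c1‖ ^ 2 + (3 - α) / 6 * ‖c2‖ := hbnd
    _ ≤ (3 - α) / 6 * M := by nlinarith [mul_le_mul_of_nonneg_right hTSt hx0,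
        mul_le_mul_of_nonneg_left hc2' hS0, mul_le_mul_of_nonneg_left hMt hS0,
        mul_le_mul_of_nonneg_right (mul_le_mul_of_nonneg_left hMt hS0) hx0,
        mul_le_mul_of_nonneg_left hM1 hS0]
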